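/- The identity matrix 1_N is a fixed point of every affine bijection σ of the Gram set 𝒢_N onto itself: σ(1_N) = 1_N. -/

import Mathlib

open Matrix

/-- The Gram set: real symmetric positive semidefinite `N × N` matrices with unit diagonal. -/
def GramSet (N : ℕ) : Set (Matrix (Fin N) (Fin N) ℝ) :=
  {G | G.PosSemidef ∧ ∀ i, G i i = 1}

/-- `σ` is an affine bijection of the Gram set `𝒢_N` onto itself. -/
def IsAffineBijOfGramSet (N : ℕ)
    (σ : Matrix (Fin N) (Fin N) ℝ → Matrix (Fin N) (Fin N) ℝ) : Prop :=
  Set.BijOn σ (GramSet N) (GramSet N) ∧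
    ∀ G ∈ GramSet N, ∀ G' ∈ GramSet N, ∀ α : ℝ, 0 ≤ α → α ≤ 1 →
      σ (α • G + (1 - α) • G') = α • σ G + (1 - α) • σ G'

namespace AffFixAux

variable {N : ℕ}

lemma quad_eq_sum (G : Matrix (Fin N) (Fin N) ℝ) (x : Fin N → ℝ) :
    x ⬝ᵥ G.mulVec x = ∑ k, ∑ l, G k l * x k * x l := by
  simp only [dotProduct, mulVec, Finset.mul_sum]
  exact Finset.sum_congr rfl fun k _ => Finset.sum_congr rfl fun l _ => by ring

lemma psd_quad {G : Matrix (Fin N) (Fin N) ℝ} (hG : G.PosSemidef) (x : Fin N → ℝ) :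
    0 ≤ x ⬝ᵥ G.mulVec x := by
  simpa using hG.dotProduct_mulVec_nonneg x

lemma sym_apply {G : Matrix (Fin N) (Fin N) ℝ} (hG : G.IsHermitian) (i j : Fin N) :
    G i j = G j i := by
  have := hG.apply j i
  simpa using this

lemma abs_entry_le_one {G : Matrix (Fin N) (Fin N) ℝ} (hG : G ∈ GramSet N) (k l : Fin N) :
    |G k l| ≤ 1 := by
  rcases eq_or_ne k l with rfl | hkl
  · rw [hG.2 k]; norm_num
  · rw [abs_le]
    have key : ∀ c : ℝ, 0 ≤ 1 + (c * G k l + c * G l k) + c * c := by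
      intro c
      have h := psd_quad hG.1 (Pi.single k 1 + Pi.single l c)
      rw [mulVec_add, dotProduct_add, add_dotProduct, add_dotProduct,
        mulVec_single, mulVec_single] at h
      simp only [single_dotProduct, dotProduct_single, mul_one, Pi.smul_apply, col_apply,
        op_smul_eq_mul] at h
      rw [hG.2 k, hG.2 l] at h
      linarith [h]
    have h1 := key 1
    have h2 := key (-1)
    rw [sym_apply hG.1.1 l k] at h1 h2
    norm_num at h1 h2
    constructor <;> linarith


/-- quadratic form bound: `xᵀGx ≤ N xᵀx` for Gram matrices. -/
lemma quad_le {G : Matrix (Fin N) (Fin N) ℝ} (hG : G ∈ GramSet N) (x : Fin N → ℝ) :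
    x ⬝ᵥ G.mulVec x ≤ (N : ℝ) * (x ⬝ᵥ x) := by
  rw [quad_eq_sum]
  have h1 : ∑ k, ∑ l, G k l * x k * x l ≤ ∑ k, ∑ l, |x k| * |x l| := by
    refine Finset.sum_le_sum fun k _ => Finset.sum_le_sum fun l _ => ?_
    have hb := abs_entry_le_one hG k l
    calc G k l * x k * x l ≤ |G k l * x k * x l| := le_abs_self _
    _ = |G k l| * |x k| * |x l| := by rw [abs_mul, abs_mul]
    _ ≤ 1 * (|x k| * |x l|) := by
        rw [mul_assoc]
        exact mul_le_mul_of_nonneg_right hb (by positivity)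
    _ = |x k| * |x l| := one_mul _
  have h2 : ∑ k, ∑ l, |x k| * |x l| = (∑ k, |x k|) * (∑ l, |x l|) :=
    (Finset.sum_mul_sum _ _ _ _).symm
  have h3 : (∑ k, |x k|) * (∑ l, |x l|) ≤ (N : ℝ) * (x ⬝ᵥ x) := by
    have := Finset.sum_mul_sq_le_sq_mul_sq Finset.univ (fun k => |x k|) (fun _ => (1:ℝ))
    simp only [mul_one, one_pow, Finset.sum_const, Finset.card_univ, Fintype.card_fin,
      nsmul_eq_mul] at this
    have hd : x ⬝ᵥ x = ∑ k, |x k| ^ 2 := by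
      simp [dotProduct, sq_abs, sq]
    rw [hd, ← sq]
    calc (∑ k, |x k|) ^ 2 ≤ (∑ k, |x k| ^ 2) * N := this
    _ = (N:ℝ) * ∑ k, |x k| ^ 2 := mul_comm _ _
  linarith


/-- Step 1: the identity admits an antipode at ratio `α = (N-1)/N` past any Gram matrix. -/
lemma id_antipode (hN : 2 ≤ N) {G : Matrix (Fin N) (Fin N) ℝ} (hG : G ∈ GramSet N) :
    ∃ H ∈ GramSet N,
      (1 : Matrix (Fin N) (Fin N) ℝ) =
        (((N:ℝ) - 1)/N) • H + (1 - ((N:ℝ) - 1)/N) • G := by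
  have hN1 : (1:ℝ) ≤ (N:ℝ) := by exact_mod_cast Nat.one_le_of_lt hN
  have hN0 : (N:ℝ) ≠ 0 := by positivity
  have hNm1 : (N:ℝ) - 1 ≠ 0 := by
    have : (2:ℝ) ≤ (N:ℝ) := by exact_mod_cast hN
    linarith
  refine ⟨((N:ℝ) - 1)⁻¹ • ((N:ℝ) • (1 : Matrix (Fin N) (Fin N) ℝ) - G), ⟨PosSemidef.of_dotProduct_mulVec_nonneg ?_ ?_, ?_⟩, ?_⟩
  · -- Hermitian
    ext i j
    simp only [conjTranspose_apply, Matrix.smul_apply, Matrix.sub_apply, one_apply, smul_eq_mul,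
      star_trivial, sym_apply hG.1.1 j i]
    by_cases h : i = j
    · subst h; rfl
    · simp [h, Ne.symm h]
  · -- quadratic form nonneg
    intro x
    have h1 : ((((N:ℝ) - 1)⁻¹ • ((N:ℝ) • (1 : Matrix (Fin N) (Fin N) ℝ) - G)) *ᵥ x)
        = ((N:ℝ) - 1)⁻¹ • ((N:ℝ) • x - G *ᵥ x) := by
      rw [smul_mulVec, sub_mulVec, smul_mulVec, one_mulVec]
    rw [h1]
    have hq := quad_le hG x
    have hxx : x ⬝ᵥ x = ∑ k, x k * x k := rfl
    simp only [star_trivial, dotProduct_smul, dotProduct_sub, dotProduct_smul, smul_eq_mul]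
    have hinv : (0:ℝ) ≤ ((N:ℝ) - 1)⁻¹ := by
      have h2 : (2:ℝ) ≤ (N:ℝ) := by exact_mod_cast hN
      have : (0:ℝ) < (N:ℝ) - 1 := by linarith
      exact (inv_pos.mpr this).le
    have : 0 ≤ (N:ℝ) * (x ⬝ᵥ x) - x ⬝ᵥ G *ᵥ x := by linarith
    exact mul_nonneg hinv this
  · -- unit diagonal
    intro i
    simp only [Matrix.smul_apply, Matrix.sub_apply, Matrix.smul_apply, one_apply_eq, smul_eq_mul, hG.2 i]
    field_simp
  · -- the convex combination identity
    ext i j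
    simp only [Matrix.add_apply, Matrix.smul_apply, Matrix.sub_apply, Matrix.smul_apply, one_apply, smul_eq_mul]
    by_cases h : i = j <;> simp only [h, if_true, if_false] <;> field_simp <;> ring


/-- sign of a boolean. -/
def sgn (b : Bool) : ℝ := if b then 1 else -1

lemma sgn_mul_self (b : Bool) : sgn b * sgn b = 1 := by cases b <;> norm_num [sgn]

lemma sgn_not (b : Bool) : sgn (!b) = - sgn b := by cases b <;> norm_num [sgn]

/-- the sign vector of `v`. -/
def chi (v : Fin N → Bool) : Fin N → ℝ := fun k => sgn (v k)

/-- the Ising matrix of `v`. -/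
def ising (v : Fin N → Bool) : Matrix (Fin N) (Fin N) ℝ :=
  Matrix.of fun k l => chi v k * chi v l

lemma ising_mem (v : Fin N → Bool) : ising v ∈ GramSet N := by
  refine ⟨PosSemidef.of_dotProduct_mulVec_nonneg ?_ ?_, ?_⟩
  · ext i j
    simp only [conjTranspose_apply, star_trivial, ising, of_apply]
    ring
  · intro x
    have : x ⬝ᵥ (ising v) *ᵥ x = (∑ k, x k * chi v k) * (∑ l, chi v l * x l) := by
      rw [Finset.sum_mul_sum]
      simp only [dotProduct, mulVec, ising, of_apply, dotProduct, Finset.mul_sum]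
      exact Finset.sum_congr rfl fun k _ => Finset.sum_congr rfl fun l _ => by ring
    rw [star_trivial, this]
    have he : (∑ l, chi v l * x l) = (∑ k, x k * chi v k) :=
      Finset.sum_congr rfl fun k _ => by ring
    rw [he]
    exact mul_self_nonneg _
  · intro i
    simp only [ising, of_apply, chi, sgn_mul_self]

lemma quad_ising_chi (v : Fin N → Bool) :
    chi v ⬝ᵥ (ising v) *ᵥ chi v = (N : ℝ) * N := by
  rw [quad_eq_sum]
  have : ∀ k l : Fin N, (ising v) k l * chi v k * chi v l = 1 := by
    intro k l
    show chi v k * chi v l * chi v k * chi v l = 1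
    have hk := sgn_mul_self (v k)
    have hl := sgn_mul_self (v l)
    show sgn (v k) * sgn (v l) * sgn (v k) * sgn (v l) = 1
    nlinarith [hk, hl]
  simp only [this, Finset.sum_const, Finset.card_univ, Fintype.card_fin, nsmul_eq_mul, mul_one]

/-- orthogonality over the hypercube. -/
lemma sum_sgn_mul_eq_zero (k l : Fin N) (hkl : k ≠ l) :
    ∑ v : Fin N → Bool, sgn (v k) * sgn (v l) = 0 := by
  have hinv : Function.Involutive
      (fun v : Fin N → Bool => Function.update v k (!(v k))) := by
    intro v
    funext m
    rcases eq_or_ne m k with rfl | hm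
    · simp [Function.update_self]
    · simp [Function.update_of_ne hm]
  have := Equiv.sum_comp (hinv.toPerm _) (fun v : Fin N → Bool => sgn (v k) * sgn (v l))
  have hneg : ∀ v : Fin N → Bool,
      (fun v : Fin N → Bool => sgn (v k) * sgn (v l)) ((hinv.toPerm _) v)
        = - (sgn (v k) * sgn (v l)) := by
    intro v
    simp only [Function.Involutive.coe_toPerm]
    rw [Function.update_self, Function.update_of_ne hkl.symm, sgn_not]
    ring
  rw [Finset.sum_congr rfl fun v _ => hneg v] at this
  rw [Finset.sum_neg_distrib] at this
  linarith

lemma sum_sgn_mul_self (k : Fin N) :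
    ∑ v : Fin N → Bool, sgn (v k) * sgn (v k) = (2:ℝ) ^ N := by
  simp only [sgn_mul_self]
  simp [Finset.card_univ]


lemma sum_quad_chi {G : Matrix (Fin N) (Fin N) ℝ} (hG : G ∈ GramSet N) :
    ∑ v : Fin N → Bool, chi v ⬝ᵥ G *ᵥ chi v = (N:ℝ) * 2 ^ N := by
  have h1 : ∀ v : Fin N → Bool, chi v ⬝ᵥ G *ᵥ chi v
      = ∑ k, ∑ l, G k l * sgn (v k) * sgn (v l) := fun v => quad_eq_sum G (chi v)
  calc ∑ v : Fin N → Bool, chi v ⬝ᵥ G *ᵥ chi v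
      = ∑ v : Fin N → Bool, ∑ k, ∑ l, G k l * sgn (v k) * sgn (v l) :=
        Finset.sum_congr rfl fun v _ => h1 v
    _ = ∑ k, ∑ v : Fin N → Bool, ∑ l, G k l * sgn (v k) * sgn (v l) := Finset.sum_comm
    _ = ∑ k, ∑ l, ∑ v : Fin N → Bool, G k l * sgn (v k) * sgn (v l) :=
        Finset.sum_congr rfl fun k _ => Finset.sum_comm
    _ = ∑ k, ∑ l, G k l * ∑ v : Fin N → Bool, sgn (v k) * sgn (v l) := by
        refine Finset.sum_congr rfl fun k _ => Finset.sum_congr rfl fun l _ => ?_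
        rw [Finset.mul_sum]
        exact Finset.sum_congr rfl fun v _ => by ring
    _ = ∑ k : Fin N, (2:ℝ) ^ N := by
        refine Finset.sum_congr rfl fun k _ => ?_
        rw [Finset.sum_eq_single k]
        · rw [sum_sgn_mul_self, hG.2 k, one_mul]
        · intro l _ hlk
          rw [sum_sgn_mul_eq_zero k l (Ne.symm hlk), mul_zero]
        · intro h; exact absurd (Finset.mem_univ k) h
    _ = (N:ℝ) * 2 ^ N := by
        rw [Finset.sum_const, Finset.card_univ, Fintype.card_fin, nsmul_eq_mul]

lemma quad_chi_eq {G : Matrix (Fin N) (Fin N) ℝ} (hG : G ∈ GramSet N)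
    (hlow : ∀ v : Fin N → Bool, (N:ℝ) ≤ chi v ⬝ᵥ G *ᵥ chi v) (v : Fin N → Bool) :
    chi v ⬝ᵥ G *ᵥ chi v = (N:ℝ) := by
  have hcard : (Finset.univ : Finset (Fin N → Bool)).card = 2 ^ N := by simp
  have h0 : ∑ w : Fin N → Bool, (chi w ⬝ᵥ G *ᵥ chi w - (N:ℝ)) = 0 := by
    rw [Finset.sum_sub_distrib, sum_quad_chi hG, Finset.sum_const, hcard, nsmul_eq_mul]
    push_cast
    ring
  have := (Finset.sum_eq_zero_iff_of_nonneg
    (fun w _ => by linarith [hlow w])).mp h0 v (Finset.mem_univ v)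
  linarith [this]

lemma quad_single {G : Matrix (Fin N) (Fin N) ℝ} (hG : G ∈ GramSet N)
    (x : Fin N → ℝ) (i : Fin N) (c : ℝ) :
    (x + Pi.single i c) ⬝ᵥ G *ᵥ (x + Pi.single i c)
      = x ⬝ᵥ G *ᵥ x + 2 * c * (∑ k, G i k * x k) + c * c := by
  have h1 : x ⬝ᵥ (G *ᵥ Pi.single i c) = c * ∑ k, G i k * x k := by
    rw [mulVec_single]
    show (∑ k, x k * (G k i * c)) = _
    rw [Finset.mul_sum]
    refine Finset.sum_congr rfl fun k _ => ?_
    rw [sym_apply hG.1.1 i k]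
    ring
  have h3 : Pi.single i c ⬝ᵥ (G *ᵥ x) = c * ∑ k, G i k * x k := by
    rw [single_dotProduct]
    rfl
  have h4 : Pi.single i c ⬝ᵥ (G *ᵥ Pi.single i c) = c * c := by
    rw [mulVec_single, single_dotProduct]
    show c * (G i i * c) = c * c
    rw [hG.2 i]
    ring
  rw [mulVec_add, dotProduct_add, add_dotProduct, add_dotProduct, h1, h3, h4]
  ring

lemma eq_one_of_antipode (hN : 2 ≤ N) {G₀ : Matrix (Fin N) (Fin N) ℝ}
    (hG₀ : G₀ ∈ GramSet N)
    (hP : ∀ M ∈ GramSet N, ∃ H ∈ GramSet N,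
      G₀ = (((N:ℝ) - 1)/N) • H + (1 - ((N:ℝ) - 1)/N) • M) :
    G₀ = 1 := by
  have hN2 : (2:ℝ) ≤ (N:ℝ) := by exact_mod_cast hN
  have hN0 : (N:ℝ) ≠ 0 := by positivity
  have hα : (0:ℝ) ≤ ((N:ℝ) - 1)/N := by
    apply div_nonneg <;> linarith
  -- lower bound on the quadratic form at sign vectors
  have hlow : ∀ v : Fin N → Bool, (N:ℝ) ≤ chi v ⬝ᵥ G₀ *ᵥ chi v := by
    intro v
    obtain ⟨H, hH, hc⟩ := hP (ising v) (ising_mem v)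
    have hq : chi v ⬝ᵥ G₀ *ᵥ chi v
        = (((N:ℝ) - 1)/N) * (chi v ⬝ᵥ H *ᵥ chi v)
          + (1 - ((N:ℝ) - 1)/N) * ((N:ℝ) * N) := by
      rw [hc, add_mulVec, smul_mulVec, smul_mulVec, dotProduct_add,
        dotProduct_smul, dotProduct_smul, quad_ising_chi, smul_eq_mul, smul_eq_mul]
    have hHq := psd_quad hH.1 (chi v)
    have hlast : (1 - ((N:ℝ) - 1)/N) * ((N:ℝ) * N) = (N:ℝ) := by
      field_simp
      ring
    rw [hq, hlast]
    nlinarith [mul_nonneg hα hHq]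
  have heq := quad_chi_eq hG₀ hlow
  -- row sums are 1
  set u : Fin N → ℝ := fun _ => 1 with hu
  have hchiu : chi (fun _ : Fin N => true) = u := by
    funext m
    simp [chi, sgn, hu]
  have hrow : ∀ i : Fin N, ∑ k, G₀ i k = 1 := by
    intro i
    have e1 : chi (Function.update (fun _ : Fin N => true) i false)
        = u + Pi.single i (-2) := by
      funext m
      rcases eq_or_ne m i with rfl | hm
      · simp [chi, sgn, Function.update_self, hu]; norm_num
      · simp [chi, sgn, Function.update_of_ne hm, Pi.single_eq_of_ne hm, hu]
    have q1 : u ⬝ᵥ G₀ *ᵥ u = (N:ℝ) := by rw [← hchiu]; exact heq _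
    have q2 : (u + Pi.single i (-2)) ⬝ᵥ G₀ *ᵥ (u + Pi.single i (-2)) = (N:ℝ) := by
      rw [← e1]; exact heq _
    rw [quad_single hG₀ u i (-2), q1] at q2
    have hsum : (∑ k, G₀ i k * u k) = ∑ k, G₀ i k := by
      refine Finset.sum_congr rfl fun k _ => ?_
      simp [hu]
    rw [hsum] at q2
    linarith
  -- off-diagonal entries vanish
  have hoff : ∀ i j : Fin N, i ≠ j → G₀ i j = 0 := by
    intro i j hij
    set x' : Fin N → ℝ := u + Pi.single j (-2) with hx'
    have e2 : chi (Function.update (fun _ : Fin N => true) j false) = x' := by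
      funext m
      rcases eq_or_ne m j with rfl | hm
      · simp [chi, sgn, Function.update_self, hu, hx']; norm_num
      · simp [chi, sgn, Function.update_of_ne hm, Pi.single_eq_of_ne hm, hu, hx']
    have e3 : chi (Function.update (Function.update (fun _ : Fin N => true) j false) i false)
        = x' + Pi.single i (-2) := by
      funext m
      rcases eq_or_ne m i with rfl | hmi
      · simp [chi, sgn, Function.update_self, hu, hx',
          Pi.single_eq_of_ne hij, Function.update_of_ne hij]
        norm_num
      · rcases eq_or_ne m j with rfl | hmj
        · simp [chi, sgn, Function.update_of_ne hmi, Function.update_self, hu, hx',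
            Pi.single_eq_of_ne hmi]
          norm_num
        · simp [chi, sgn, Function.update_of_ne hmi, Function.update_of_ne hmj,
            Pi.single_eq_of_ne hmi, Pi.single_eq_of_ne hmj, hu, hx']
    have q1 : x' ⬝ᵥ G₀ *ᵥ x' = (N:ℝ) := by rw [← e2]; exact heq _
    have q2 : (x' + Pi.single i (-2)) ⬝ᵥ G₀ *ᵥ (x' + Pi.single i (-2)) = (N:ℝ) := by
      rw [← e3]; exact heq _
    rw [quad_single hG₀ x' i (-2), q1] at q2
    have hsum : (∑ k, G₀ i k * x' k) = 1 + G₀ i j * (-2) := by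
      have : (∑ k, G₀ i k * x' k)
          = (∑ k, G₀ i k) + ∑ k, G₀ i k * (Pi.single j (-2 : ℝ) : Fin N → ℝ) k := by
        rw [← Finset.sum_add_distrib]
        refine Finset.sum_congr rfl fun k _ => ?_
        simp [hx', hu, Pi.add_apply]
        ring
      rw [this, hrow i]
      congr 1
      rw [Finset.sum_eq_single j]
      · rw [Pi.single_eq_same]
      · intro l _ hlj
        rw [Pi.single_eq_of_ne hlj, mul_zero]
      · intro h; exact absurd (Finset.mem_univ j) h
    rw [hsum] at q2
    linarith
  -- conclude
  ext i j
  rcases eq_or_ne i j with rfl | hij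
  · rw [hG₀.2 i, one_apply_eq]
  · rw [hoff i j hij, one_apply_ne hij]

end AffFixAux

/-- The identity matrix is a fixed point of every affine bijection of the Gram set. -/
theorem affineBij_fixes_id (N : ℕ)
    (σ : Matrix (Fin N) (Fin N) ℝ → Matrix (Fin N) (Fin N) ℝ)
    (hσ : IsAffineBijOfGramSet N σ) :
    σ (1 : Matrix (Fin N) (Fin N) ℝ) = 1 := by
  obtain ⟨hbij, haff⟩ := hσ
  have hone : (1 : Matrix (Fin N) (Fin N) ℝ) ∈ GramSet N :=
    ⟨Matrix.PosSemidef.one, fun i => Matrix.one_apply_eq i⟩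
  have hσ1 : σ 1 ∈ GramSet N := hbij.mapsTo hone
  rcases lt_or_ge N 2 with hN | hN
  · -- trivial case `N ≤ 1`
    ext i j
    have hij : i = j := Fin.ext (by omega)
    subst hij
    rw [hσ1.2 i, Matrix.one_apply_eq]
  · -- main case `N ≥ 2`
    have hN2 : (2:ℝ) ≤ (N:ℝ) := by exact_mod_cast hN
    have hα0 : (0:ℝ) ≤ ((N:ℝ) - 1)/N := by
      apply div_nonneg <;> linarith
    have hα1 : ((N:ℝ) - 1)/N ≤ 1 := by
      rw [div_le_one (by linarith)]
      linarith
    apply AffFixAux.eq_one_of_antipode hN hσ1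
    intro M hM
    obtain ⟨G, hG, rfl⟩ := hbij.surjOn hM
    obtain ⟨H, hH, hid⟩ := AffFixAux.id_antipode hN hG
    refine ⟨σ H, hbij.mapsTo hH, ?_⟩
    calc σ 1 = σ ((((N:ℝ) - 1)/N) • H + (1 - ((N:ℝ) - 1)/N) • G) := by rw [← hid]
    _ = (((N:ℝ) - 1)/N) • σ H + (1 - ((N:ℝ) - 1)/N) • σ G :=
        haff H hH G hG _ hα0 hα1
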